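/- Let X be a Priestley space. Then CC(X), equipped with the Vietoris topology and the order ⊴, is an Esakia root system: it is compact; for all C₁, C₂ ∈ CC(X) with C₁ ⋬ C₂ there is a clopen ⊴-upset 𝒰 of CC(X) with C₁ ∈ 𝒰 and C₂ ∉ 𝒰; the ⊴-downset of every clopen subset of CC(X) is clopen; and for every C ∈ CC(X) the set {K | C ⊴ K} is totally ordered by ⊴. -/

import Mathlib

open Set TopologicalSpace

/-- The set of nonempty closed chains of a Priestley space `X`. -/
def CC (X : Type*) [TopologicalSpace X] [Preorder X] : Set (Set X) :=
  {C | C.Nonempty ∧ IsClosed C ∧ IsChain (· ≤ ·) C}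

variable {X : Type*} [TopologicalSpace X] [Preorder X]

/-- `□A = {C ∈ CC(X) | C ⊆ A}`. -/
def ccBox (A : Set X) : Set ↥(CC X) := {C | (C : Set X) ⊆ A}

/-- `◇A = {C ∈ CC(X) | C ∩ A ≠ ∅}`. -/
def ccDia (A : Set X) : Set ↥(CC X) := {C | ((C : Set X) ∩ A).Nonempty}

/-- The Vietoris topology on `CC X`, generated by the subbasis `{□V, ◇V | V clopen}`. -/
instance ccTop : TopologicalSpace ↥(CC X) :=
  generateFrom {S | ∃ V : Set X, IsClopen V ∧ (S = ccBox V ∨ S = ccDia V)}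

/-- The order `⊴` on closed chains: `C₁ ⊴ C₂` iff `C₂ ⊆ C₁` and `C₂` is an upset in `C₁`. -/
def lec (C₁ C₂ : Set X) : Prop :=
  C₂ ⊆ C₁ ∧ ∀ x ∈ C₂, ∀ y ∈ C₁, x ≤ y → y ∈ C₂

/-- The `⊴`-downset generated by a collection of closed chains. -/
def ccDown (𝒜 : Set ↥(CC X)) : Set ↥(CC X) := {C | ∃ K ∈ 𝒜, lec (C : Set X) (K : Set X)}

/-! ### Auxiliary lemmas -/

section Aux

lemma compl_ccBox (V : Set X) : (ccBox V : Set ↥(CC X))ᶜ = ccDia Vᶜ := by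
  ext C
  simp only [ccBox, ccDia, mem_compl_iff, mem_setOf_eq, not_subset]
  constructor
  · rintro ⟨x, hx, hxV⟩; exact ⟨x, hx, hxV⟩
  · rintro ⟨x, hx, hxV⟩; exact ⟨x, hx, hxV⟩

lemma compl_ccDia (V : Set X) : (ccDia V : Set ↥(CC X))ᶜ = ccBox Vᶜ := by
  ext C
  simp only [ccDia, ccBox, mem_compl_iff, mem_setOf_eq, nonempty_iff_ne_empty, not_not]
  constructor
  · intro h x hx hxV
    exact absurd h (nonempty_iff_ne_empty.1 ⟨x, hx, hxV⟩)
  · intro h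
    rw [← disjoint_iff_inter_eq_empty]
    exact disjoint_left.2 fun x hx hV => h hx hV

lemma isOpen_ccBox {V : Set X} (hV : IsClopen V) : IsOpen (ccBox V : Set ↥(CC X)) :=
  isOpen_generateFrom_of_mem ⟨V, hV, Or.inl rfl⟩

lemma isOpen_ccDia {V : Set X} (hV : IsClopen V) : IsOpen (ccDia V : Set ↥(CC X)) :=
  isOpen_generateFrom_of_mem ⟨V, hV, Or.inr rfl⟩

lemma isClopen_ccBox {V : Set X} (hV : IsClopen V) : IsClopen (ccBox V : Set ↥(CC X)) :=
  ⟨by rw [← isOpen_compl_iff, compl_ccBox]; exact isOpen_ccDia hV.compl, isOpen_ccBox hV⟩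

lemma isClopen_ccDia {V : Set X} (hV : IsClopen V) : IsClopen (ccDia V : Set ↥(CC X)) :=
  ⟨by rw [← isOpen_compl_iff, compl_ccDia]; exact isOpen_ccBox hV.compl, isOpen_ccDia hV⟩

end Aux

section Sep

variable {Y : Type*} [TopologicalSpace Y] [PartialOrder Y] [PriestleySpace Y]

lemma myExists_clopen_pt_not {z y : Y} (hzy : z ≠ y) :
    ∃ H : Set Y, IsClopen H ∧ z ∈ H ∧ y ∉ H := by
  rcases hzy.not_le_or_not_ge with h | h
  · obtain ⟨U, hU, _, hz, hy⟩ := exists_isClopen_upper_of_not_le h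
    exact ⟨U, hU, hz, hy⟩
  · obtain ⟨U, hU, _, hy, hz⟩ := exists_isClopen_upper_of_not_le h
    exact ⟨Uᶜ, hU.compl, hz, not_not_intro hy⟩

lemma mySep_pt_compact {F : Set Y} (hF : IsCompact F) {y : Y} (hy : y ∉ F) :
    ∃ G : Set Y, IsClopen G ∧ y ∈ G ∧ ∀ z ∈ F, z ∉ G := by
  have h : ∀ z : F, ∃ H : Set Y, IsClopen H ∧ (z : Y) ∈ H ∧ y ∉ H :=
    fun z => myExists_clopen_pt_not (fun e => hy (e ▸ z.2))
  choose H hHc hHz hHy using h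
  obtain ⟨t, ht⟩ := hF.elim_finite_subcover (fun z : F => H z)
    (fun z => (hHc z).isOpen) (fun x hx => mem_iUnion.2 ⟨⟨x, hx⟩, hHz _⟩)
  refine ⟨(⋃ z ∈ t, H z)ᶜ, (isClopen_biUnion_finset fun z _ => hHc z).compl, ?_, ?_⟩
  · simp only [mem_compl_iff, mem_iUnion]
    rintro ⟨z, _, hz⟩; exact hHy z hz
  · intro z hz hzG
    exact hzG (by simpa using mem_iUnion₂.1 (ht hz))

lemma myExists_clopen_lower_sup {F : Set Y} (hF : IsCompact F) {y : Y}
    (h : ∀ z ∈ F, ¬ y ≤ z) :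
    ∃ D : Set Y, IsClopen D ∧ IsLowerSet D ∧ F ⊆ D ∧ y ∉ D := by
  have h' : ∀ z : F, ∃ U : Set Y, IsClopen U ∧ IsUpperSet U ∧ y ∈ U ∧ (z : Y) ∉ U :=
    fun z => exists_isClopen_upper_of_not_le (h z z.2)
  choose U hUc hUu hUy hUz using h'
  obtain ⟨t, ht⟩ := hF.elim_finite_subcover (fun z : F => (U z)ᶜ)
    (fun z => (hUc z).compl.isOpen) (fun x hx => mem_iUnion.2 ⟨⟨x, hx⟩, hUz _⟩)
  refine ⟨⋃ z ∈ t, (U z)ᶜ, isClopen_biUnion_finset fun z _ => (hUc z).compl,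
    isLowerSet_iUnion₂ fun z _ => (hUu z).compl, ht, ?_⟩
  simp only [mem_iUnion, mem_compl_iff]
  rintro ⟨z, _, hz⟩; exact hz (hUy z)

lemma myExists_clopen_upper_sup {K : Set Y} (hK : IsCompact K) {x : Y}
    (h : ∀ k ∈ K, ¬ k ≤ x) :
    ∃ U : Set Y, IsClopen U ∧ IsUpperSet U ∧ K ⊆ U ∧ x ∉ U := by
  have h' : ∀ k : K, ∃ U : Set Y, IsClopen U ∧ IsUpperSet U ∧ (k : Y) ∈ U ∧ x ∉ U :=
    fun k => exists_isClopen_upper_of_not_le (h k k.2)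
  choose U hUc hUu hUk hUx using h'
  obtain ⟨t, ht⟩ := hK.elim_finite_subcover (fun k : K => U k)
    (fun k => (hUc k).isOpen) (fun z hz => mem_iUnion.2 ⟨⟨z, hz⟩, hUk _⟩)
  refine ⟨⋃ k ∈ t, U k, isClopen_biUnion_finset fun k _ => hUc k,
    isUpperSet_iUnion₂ fun k _ => hUu k, ht, ?_⟩
  simp only [mem_iUnion]
  rintro ⟨k, _, hk⟩; exact hUx k hk

lemma myExists_clopen_upper_sep {K F : Set Y} (hK : IsCompact K) (hF : IsCompact F)
    (h : ∀ k ∈ K, ∀ x ∈ F, ¬ k ≤ x) :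
    ∃ U : Set Y, IsClopen U ∧ IsUpperSet U ∧ K ⊆ U ∧ ∀ x ∈ F, x ∉ U := by
  have h' : ∀ x : F, ∃ U : Set Y, IsClopen U ∧ IsUpperSet U ∧ K ⊆ U ∧ (x : Y) ∉ U :=
    fun x => myExists_clopen_upper_sup hK (fun k hk => h k hk x x.2)
  choose U hUc hUu hUK hUx using h'
  obtain ⟨t, ht⟩ := hF.elim_finite_subcover (fun x : F => (U x)ᶜ)
    (fun x => (hUc x).compl.isOpen) (fun z hz => mem_iUnion.2 ⟨⟨z, hz⟩, hUx _⟩)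
  refine ⟨⋂ x ∈ t, U x, isClopen_biInter_finset fun x _ => hUc x,
    isUpperSet_iInter₂ fun x _ => hUu x, subset_iInter₂ fun x _ => hUK x, ?_⟩
  intro x hx hmem
  obtain ⟨x', hx', hxU⟩ := mem_iUnion₂.1 (ht hx)
  exact hxU (mem_iInter₂.1 hmem x' hx')

lemma myIsClosed_le_pt (y : Y) : IsClosed {z : Y | z ≤ y} := by
  rw [← isOpen_compl_iff, isOpen_iff_forall_mem_open]
  intro w hw
  obtain ⟨U, hUc, hUu, hwU, hyU⟩ := exists_isClopen_upper_of_not_le (hw : ¬ w ≤ y)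
  exact ⟨U, fun z hz hzy => hyU (hUu hzy hz), hUc.isOpen, hwU⟩

end Sep

section Main

variable {Y : Type*} [TopologicalSpace Y] [PartialOrder Y] [CompactSpace Y] [PriestleySpace Y]

open Filter Topology

lemma ccCompactSpace : CompactSpace ↥(CC Y) := by
  constructor
  rw [isCompact_iff_ultrafilter_le_nhds]
  intro F _
  classical
  set L := {x : Y | ∀ V : Set Y, IsClopen V → x ∈ V → ccDia V ∈ F} with hLdef
  have hnotL : ∀ x ∉ L, ∃ W : Set Y, IsClopen W ∧ x ∈ W ∧ ccBox Wᶜ ∈ F := by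
    intro x hx
    simp only [hLdef, mem_setOf_eq, not_forall] at hx
    obtain ⟨W, hWc, hxW, hWF⟩ := hx
    refine ⟨W, hWc, hxW, ?_⟩
    rw [← compl_ccDia]
    exact (Ultrafilter.compl_mem_iff_notMem).2 hWF
  have hLclosed : IsClosed L := by
    rw [← isOpen_compl_iff, isOpen_iff_forall_mem_open]
    intro x hx
    obtain ⟨W, hWc, hxW, hWF⟩ := hnotL x hx
    refine ⟨W, fun y hy hyL => ?_, hWc.isOpen, hxW⟩
    have h1 : ccDia W ∈ F := hyL W hWc hy
    have h2 : (ccDia W : Set ↥(CC Y))ᶜ ∈ F := by rw [compl_ccDia]; exact hWF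
    exact (Ultrafilter.compl_mem_iff_notMem).1 h2 h1
  have hLne : L.Nonempty := by
    by_contra h
    rw [not_nonempty_iff_eq_empty] at h
    have hall : ∀ x : Y, ∃ W : Set Y, IsClopen W ∧ x ∈ W ∧ ccBox Wᶜ ∈ F :=
      fun x => hnotL x (by rw [h]; exact notMem_empty x)
    choose W hWc hWx hWF using hall
    obtain ⟨t, ht⟩ := isCompact_univ.elim_finite_subcover W
      (fun x => (hWc x).isOpen) (fun x _ => mem_iUnion.2 ⟨x, hWx x⟩)
    have hmem : ⋂ x ∈ t, ccBox (W x)ᶜ ∈ F :=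
      (biInter_mem t.finite_toSet).2 fun x _ => hWF x
    obtain ⟨C, hC⟩ := F.nonempty_of_mem hmem
    obtain ⟨c, hc⟩ := C.2.1
    obtain ⟨x, hxt, hcx⟩ := mem_iUnion₂.1 (ht (mem_univ c))
    exact (mem_iInter₂.1 hC x hxt) hc hcx
  have hLchain : IsChain (· ≤ ·) L := by
    intro x hx y hy hxy
    by_contra hcon
    push_neg at hcon
    obtain ⟨hnxy, hnyx⟩ := hcon
    obtain ⟨U, hUc, hUu, hxU, hyU⟩ := exists_isClopen_upper_of_not_le hnxy
    obtain ⟨U', hU'c, hU'u, hyU', hxU'⟩ := exists_isClopen_upper_of_not_le hnyx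
    have h1 : ccDia (U ∩ U'ᶜ) ∈ F := hx _ (hUc.inter hU'c.compl) ⟨hxU, hxU'⟩
    have h2 : ccDia (U' ∩ Uᶜ) ∈ F := hy _ (hU'c.inter hUc.compl) ⟨hyU', hyU⟩
    obtain ⟨C, hC1, hC2⟩ := F.nonempty_of_mem (F.inter_mem h1 h2)
    obtain ⟨a, haC, haU, haU'⟩ := hC1
    obtain ⟨b, hbC, hbU', hbU⟩ := hC2
    have hab : a ≠ b := fun e => hbU (e ▸ haU)
    rcases C.2.2.2 haC hbC hab with h | h
    · exact hbU (hUu h haU)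
    · exact haU' (hU'u h hbU')
  have hLmem : L ∈ CC Y := ⟨hLne, hLclosed, hLchain⟩
  refine ⟨⟨L, hLmem⟩, mem_univ _, ?_⟩
  have hnhds : (𝓝 (⟨L, hLmem⟩ : ↥(CC Y))) =
      ⨅ s ∈ {s | (⟨L, hLmem⟩ : ↥(CC Y)) ∈ s ∧
        s ∈ {S | ∃ V : Set Y, IsClopen V ∧ (S = ccBox V ∨ S = ccDia V)}}, 𝓟 s :=
    nhds_generateFrom
  rw [hnhds]
  refine le_iInf₂ fun s hs => ?_
  rw [le_principal_iff]
  obtain ⟨hLs, V, hVc, rfl | rfl⟩ := hs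
  · have hLV : L ⊆ V := hLs
    have hVcompl : IsCompact (Vᶜ : Set Y) := hVc.compl.isClosed.isCompact
    have hall : ∀ x : (Vᶜ : Set Y), ∃ W : Set Y, IsClopen W ∧ (x : Y) ∈ W ∧ ccBox Wᶜ ∈ F :=
      fun x => hnotL x (fun hxL => x.2 (hLV hxL))
    choose W hWc hWx hWF using hall
    obtain ⟨t, ht⟩ := hVcompl.elim_finite_subcover (fun x : (Vᶜ : Set Y) => W x)
      (fun x => (hWc x).isOpen) (fun z hz => mem_iUnion.2 ⟨⟨z, hz⟩, hWx _⟩)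
    have hmem : ⋂ x ∈ t, ccBox (W x)ᶜ ∈ F :=
      (biInter_mem t.finite_toSet).2 fun x _ => hWF x
    refine mem_of_superset hmem ?_
    intro C hC c hc
    by_contra hcV
    obtain ⟨x, hxt, hcx⟩ := mem_iUnion₂.1 (ht hcV)
    exact (mem_iInter₂.1 hC x hxt) hc hcx
  · obtain ⟨x, hxL, hxV⟩ := hLs
    exact hxL V hVc hxV

lemma ccSep (C₁ C₂ : ↥(CC Y)) (h : ¬ lec (C₁ : Set Y) (C₂ : Set Y)) :
    ∃ 𝒰 : Set ↥(CC Y), IsClopen 𝒰 ∧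
      (∀ A ∈ 𝒰, ∀ B : ↥(CC Y), lec (A : Set Y) (B : Set Y) → B ∈ 𝒰) ∧
      C₁ ∈ 𝒰 ∧ C₂ ∉ 𝒰 := by
  by_cases hsub : (C₂ : Set Y) ⊆ (C₁ : Set Y)
  · rw [lec, not_and] at h
    have h2 := h hsub
    push_neg at h2
    obtain ⟨x₀, hx₀, y₀, hy₀, hxy, hy₀n⟩ := h2
    set K := (C₂ : Set Y) ∩ {z | z ≤ y₀} with hKdef
    have hKclosed : IsClosed K := C₂.2.2.1.inter (myIsClosed_le_pt y₀)
    have hKn : ∀ z ∈ K, ¬ y₀ ≤ z := by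
      intro z hz hle
      exact hy₀n ((le_antisymm hz.2 hle) ▸ hz.1)
    obtain ⟨D, hDc, hDl, hKD, hy₀D⟩ := myExists_clopen_lower_sup hKclosed.isCompact hKn
    have hyF : y₀ ∉ (C₂ : Set Y) ∪ D := by
      rintro (h' | h')
      · exact hy₀n h'
      · exact hy₀D h'
    obtain ⟨G, hGc, hyG, hGdisj⟩ :=
      mySep_pt_compact ((C₂.2.2.1.union hDc.isClosed).isCompact) hyF
    refine ⟨ccDia G ∪ ccBox Dᶜ, (isClopen_ccDia hGc).union (isClopen_ccBox hDc.compl),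
      ?_, Or.inl ⟨y₀, hy₀, hyG⟩, ?_⟩
    · rintro A (⟨g, hgA, hgG⟩ | hbox) B hB
      · by_cases hex : ∃ b ∈ (B : Set Y), b ≤ g
        · obtain ⟨b, hb, hbg⟩ := hex
          exact Or.inl ⟨g, hB.2 b hb g hgA hbg, hgG⟩
        · push_neg at hex
          refine Or.inr fun b hb hbD => ?_
          have hgb : g ≤ b := by
            rcases eq_or_ne b g with rfl | hne
            · exact le_rfl
            · rcases A.2.2.2 (hB.1 hb) hgA hne with h' | h'
              · exact absurd h' (hex b hb)
              · exact h'
          have hgD : g ∉ D := fun hg => hGdisj g (Or.inr hg) hgG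
          exact hgD (hDl hgb hbD)
      · exact Or.inr fun x hx => hbox (hB.1 hx)
    · rintro (⟨z, hz, hzG⟩ | hbox)
      · exact hGdisj z (Or.inl hz) hzG
      · exact (hbox hx₀) (hKD ⟨hx₀, hxy⟩)
  · obtain ⟨z, hz₂, hz₁⟩ := not_subset.1 hsub
    obtain ⟨G, hGc, hzG, hGd⟩ := mySep_pt_compact (C₁.2.2.1.isCompact) hz₁
    refine ⟨ccBox Gᶜ, isClopen_ccBox hGc.compl, ?_, ?_, ?_⟩
    · intro A hA B hB b hb
      exact hA (hB.1 hb)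
    · intro c hc
      exact hGd c hc
    · intro hbox
      exact (hbox hz₂) hzG

lemma ccDown_isOpen {𝒱 : Set ↥(CC Y)} (h𝒱 : IsOpen 𝒱) : IsOpen (ccDown 𝒱) := by
  classical
  rw [isOpen_iff_forall_mem_open]
  intro C hC
  obtain ⟨K, hK𝒱, hlec⟩ := hC
  have hbasis := isTopologicalBasis_of_subbasis
    (rfl : (ccTop : TopologicalSpace ↥(CC Y)) =
      generateFrom {S | ∃ V : Set Y, IsClopen V ∧ (S = ccBox V ∨ S = ccDia V)})
  obtain ⟨v, hvB, hKv, hv𝒱⟩ := hbasis.exists_subset_of_mem_open hK𝒱 h𝒱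
  obtain ⟨f, ⟨hfin, hfsub⟩, rfl⟩ := hvB
  have hsel : ∀ s, s ∈ f → ∃ V : Set Y, IsClopen V ∧ (s = ccBox V ∨ s = ccDia V) :=
    fun s hs => hfsub hs
  choose! Vf hVfc hVfd using hsel
  set fb := {s ∈ f | s = ccBox (Vf s)} with hfbdef
  set fd := {s ∈ f | s ≠ ccBox (Vf s)} with hfddef
  have hfdd : ∀ s ∈ fd, s = ccDia (Vf s) := fun s hs => (hVfd s hs.1).resolve_left hs.2
  set V₀ := ⋂ s ∈ fb, Vf s with hV₀def
  have hV₀c : IsClopen V₀ :=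
    (hfin.subset (sep_subset _ _)).isClopen_biInter fun s hs => hVfc s hs.1
  have hKV₀ : (K : Set Y) ⊆ V₀ := by
    refine subset_iInter₂ fun s hs => ?_
    have : K ∈ ccBox (Vf s) := hs.2 ▸ (hKv s hs.1)
    exact this
  have hKd : ∀ s ∈ fd, ((K : Set Y) ∩ Vf s).Nonempty := by
    intro s hs
    have : K ∈ ccDia (Vf s) := (hfdd s hs) ▸ (hKv s hs.1)
    exact this
  have hFc : IsCompact ((C : Set Y) ∩ V₀ᶜ) :=
    (C.2.2.1.inter hV₀c.compl.isClosed).isCompact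
  have hKF : ∀ k ∈ (K : Set Y), ∀ x ∈ (C : Set Y) ∩ V₀ᶜ, ¬ k ≤ x :=
    fun k hk x hx hle => hx.2 (hKV₀ (hlec.2 k hk x hx.1 hle))
  obtain ⟨U, hUc, hUu, hKU, hUF⟩ :=
    myExists_clopen_upper_sep K.2.2.1.isCompact hFc hKF
  refine ⟨ccBox (V₀ ∪ Uᶜ) ∩ (ccDia (V₀ ∩ U) ∩ ⋂ s ∈ fd, ccDia (Vf s ∩ U)), ?_, ?_, ?_⟩
  · rintro C' ⟨hbox, hdia0, hdias⟩
    set K' := (C' : Set Y) ∩ U with hK'def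
    have hK'mem : K' ∈ CC Y := by
      refine ⟨?_, C'.2.2.1.inter hUc.isClosed, IsChain.mono inter_subset_left C'.2.2.2⟩
      obtain ⟨c, hcC, hcV⟩ := hdia0
      exact ⟨c, hcC, hcV.2⟩
    have hlec' : lec (C' : Set Y) K' :=
      ⟨inter_subset_left, fun x hx y hy hle => ⟨hy, hUu hle hx.2⟩⟩
    have hK'V : (⟨K', hK'mem⟩ : ↥(CC Y)) ∈ ⋂₀ f := by
      intro s hs
      by_cases hb : s = ccBox (Vf s)
      · rw [hb]
        intro x hx
        have hxV₀ : x ∈ V₀ := by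
          rcases hbox hx.1 with h' | h'
          · exact h'
          · exact absurd hx.2 h'
        exact mem_iInter₂.1 hxV₀ s ⟨hs, hb⟩
      · rw [hfdd s ⟨hs, hb⟩]
        obtain ⟨c, hcC, hcV, hcU⟩ := mem_iInter₂.1 hdias s ⟨hs, hb⟩
        exact ⟨c, ⟨hcC, hcU⟩, hcV⟩
    exact ⟨⟨K', hK'mem⟩, hv𝒱 hK'V, hlec'⟩
  · refine ((isOpen_ccBox (hV₀c.union hUc.compl)).inter
      ((isOpen_ccDia (hV₀c.inter hUc)).inter ?_))
    exact (hfin.subset (sep_subset _ _)).isOpen_biInter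
      fun s hs => isOpen_ccDia ((hVfc s hs.1).inter hUc)
  · refine ⟨?_, ?_, ?_⟩
    · intro c hc
      by_cases hcU : c ∈ U
      · refine Or.inl ?_
        by_contra hcV₀
        exact hUF c ⟨hc, hcV₀⟩ hcU
      · exact Or.inr hcU
    · obtain ⟨k, hk⟩ := K.2.1
      exact ⟨k, hlec.1 hk, hKV₀ hk, hKU hk⟩
    · refine mem_iInter₂.2 fun s hs => ?_
      obtain ⟨k, hk, hkV⟩ := hKd s hs
      exact ⟨k, hlec.1 hk, hkV, hKU hk⟩

lemma ccDown_isClosed {𝒱 : Set ↥(CC Y)} (h𝒱 : IsClosed 𝒱) : IsClosed (ccDown 𝒱) := by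
  haveI : CompactSpace ↥(CC Y) := ccCompactSpace
  rw [← isOpen_compl_iff, isOpen_iff_forall_mem_open]
  intro C hC
  have hno : ∀ K : ↥(CC Y), K ∈ 𝒱 → ¬ lec (C : Set Y) (K : Set Y) :=
    fun K hK hl => hC ⟨K, hK, hl⟩
  choose 𝒰 h𝒰c h𝒰up h𝒰C h𝒰K using fun K : 𝒱 => ccSep C K (hno K K.2)
  obtain ⟨t, ht⟩ := h𝒱.isCompact.elim_finite_subcover (fun K : 𝒱 => (𝒰 K)ᶜ)
    (fun K => (h𝒰c K).compl.isOpen) (fun K hK => mem_iUnion.2 ⟨⟨K, hK⟩, h𝒰K _⟩)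
  refine ⟨⋂ K ∈ t, 𝒰 K, ?_, isOpen_biInter_finset fun K _ => (h𝒰c K).isOpen,
    mem_iInter₂.2 fun K _ => h𝒰C K⟩
  intro C' hC' hCd
  obtain ⟨K', hK'𝒱, hl⟩ := hCd
  obtain ⟨K₀, hK₀t, hK₀⟩ := mem_iUnion₂.1 (ht hK'𝒱)
  exact hK₀ (h𝒰up K₀ C' (mem_iInter₂.1 hC' K₀ hK₀t) K' hl)

end Main

/-- `CC(X)` with the Vietoris topology and the order `⊴` is an Esakia root system:
compact, Priestley-separated by clopen `⊴`-upsets, the `⊴`-downset of every clopen is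
clopen, and the set of `⊴`-successors of every point is a chain. -/
theorem stmt6 (X : Type*) [TopologicalSpace X] [PartialOrder X] [CompactSpace X]
    [PriestleySpace X] :
    CompactSpace ↥(CC X) ∧
    (∀ C₁ C₂ : ↥(CC X), ¬ lec (C₁ : Set X) (C₂ : Set X) →
      ∃ 𝒰 : Set ↥(CC X), IsClopen 𝒰 ∧
        (∀ A ∈ 𝒰, ∀ B : ↥(CC X), lec (A : Set X) (B : Set X) → B ∈ 𝒰) ∧
        C₁ ∈ 𝒰 ∧ C₂ ∉ 𝒰) ∧
    (∀ 𝒱 : Set ↥(CC X), IsClopen 𝒱 → IsClopen (ccDown 𝒱)) ∧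
    (∀ C : ↥(CC X),
      IsChain (fun K₁ K₂ : ↥(CC X) => lec (K₁ : Set X) (K₂ : Set X))
        {K : ↥(CC X) | lec (C : Set X) (K : Set X)}) := by
  refine ⟨ccCompactSpace, fun C₁ C₂ h => ccSep C₁ C₂ h, ?_, ?_⟩
  · intro 𝒱 h𝒱
    exact ⟨ccDown_isClosed h𝒱.isClosed, ccDown_isOpen h𝒱.isOpen⟩
  · intro C K₁ hK₁ K₂ hK₂ hne
    by_cases hsub : (K₂ : Set X) ⊆ (K₁ : Set X)
    · refine Or.inl ⟨hsub, fun x hx y hy hle => ?_⟩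
      exact hK₂.2 x hx y (hK₁.1 hy) hle
    · obtain ⟨z, hz₂, hz₁⟩ := not_subset.1 hsub
      have hsub' : (K₁ : Set X) ⊆ (K₂ : Set X) := by
        intro w hw
        have hwz : w ≠ z := fun e => hz₁ (e ▸ hw)
        rcases C.2.2.2 (hK₁.1 hw) (hK₂.1 hz₂) hwz with h' | h'
        · exact absurd (hK₁.2 w hw z (hK₂.1 hz₂) h') hz₁
        · exact hK₂.2 z hz₂ w (hK₁.1 hw) h'
      exact Or.inr ⟨hsub', fun x hx y hy hle => hK₁.2 x hx y (hK₂.1 hy) hle⟩
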